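/- Let d₁ ≥ 1 be an integer, s > 0 and R > 0. Let E : (0,∞) → ℝ be differentiable and v : (0,∞) × [0,R] → ℝ be such that v, ∂_r v, ∂²_{rr} v, ∂_μ v and ∂²_{μr} v exist and are continuous, and for every μ > 0: v(μ,R) = 0, ∂_r v(μ,0) = 0, ∫₀^R v(μ,r)² r^{d₁-1} dr = 1, and −∂²_{rr} v(μ,r) − ((d₁−1)/r) ∂_r v(μ,r) + μ r^{2s} v(μ,r) = E(μ) v(μ,r) for all r ∈ (0,R). Then for every μ > 0, E(μ) − (R^{d₁}/2) (∂_r v(μ,R))² = μ(1+s) E'(μ). -/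

import Mathlib

open MeasureTheory Set Filter intervalIntegral Topology

set_option maxHeartbeats 2000000

/-- for a family `v(μ,·)` of normalized radial Dirichlet
eigenfunctions of `-Δ + μ r^{2s}` on the ball of radius `R` in `ℝ^{d₁}` with eigenvalue
`E(μ)`, differentiable in `μ`, one has `E(μ) − (R^{d₁}/2) (∂_r v(μ,R))² = μ(1+s) E'(μ)`. -/
theorem radial_schrodinger_mu_identity (d₁ : ℕ) (hd₁ : 1 ≤ d₁) (s R : ℝ) (hs : 0 < s) (hR : 0 < R)
    (E E' : ℝ → ℝ) (v vr vrr vμ vμr : ℝ → ℝ → ℝ)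
    (hE : ∀ μ > (0:ℝ), HasDerivAt E (E' μ) μ)
    (hvr : ∀ μ > (0:ℝ), ∀ r ∈ Set.Icc 0 R, HasDerivWithinAt (v μ) (vr μ r) (Set.Icc 0 R) r)
    (hvrr : ∀ μ > (0:ℝ), ∀ r ∈ Set.Icc 0 R, HasDerivWithinAt (vr μ) (vrr μ r) (Set.Icc 0 R) r)
    (hvμ : ∀ μ > (0:ℝ), ∀ r ∈ Set.Icc 0 R, HasDerivAt (fun m => v m r) (vμ μ r) μ)
    (hvμr : ∀ μ > (0:ℝ), ∀ r ∈ Set.Icc 0 R, HasDerivAt (fun m => vr m r) (vμr μ r) μ)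
    (hcv : ContinuousOn (fun p : ℝ × ℝ => v p.1 p.2) (Set.Ioi 0 ×ˢ Set.Icc 0 R))
    (hcvr : ContinuousOn (fun p : ℝ × ℝ => vr p.1 p.2) (Set.Ioi 0 ×ˢ Set.Icc 0 R))
    (hcvrr : ContinuousOn (fun p : ℝ × ℝ => vrr p.1 p.2) (Set.Ioi 0 ×ˢ Set.Icc 0 R))
    (hcvμ : ContinuousOn (fun p : ℝ × ℝ => vμ p.1 p.2) (Set.Ioi 0 ×ˢ Set.Icc 0 R))
    (hcvμr : ContinuousOn (fun p : ℝ × ℝ => vμr p.1 p.2) (Set.Ioi 0 ×ˢ Set.Icc 0 R))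
    (hbcR : ∀ μ > (0:ℝ), v μ R = 0)
    (hbc0 : ∀ μ > (0:ℝ), vr μ 0 = 0)
    (hnorm : ∀ μ > (0:ℝ), ∫ r in (0:ℝ)..R, (v μ r) ^ 2 * r ^ (d₁ - 1) = 1)
    (hode : ∀ μ > (0:ℝ), ∀ r ∈ Set.Ioo 0 R,
      -(vrr μ r) - (((d₁ : ℝ) - 1) / r) * vr μ r + μ * r ^ (2 * s) * v μ r = E μ * v μ r) :
    ∀ μ > (0:ℝ), E μ - R ^ d₁ / 2 * (vr μ R) ^ 2 = μ * (1 + s) * E' μ := by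
  intro μ hμ
  have hR0 : (0:ℝ) ≤ R := hR.le
  have huIcc : Set.uIcc (0:ℝ) R = Set.Icc 0 R := Set.uIcc_of_le hR0
  have hΙeq : Set.uIoc (0:ℝ) R = Set.Ioc 0 R := Set.uIoc_of_le hR0
  have hs2 : (0:ℝ) < 2 * s := by linarith
  have hrpow : Continuous fun r : ℝ => r ^ (2*s) := by
    rw [continuous_iff_continuousAt]
    exact fun x => Real.continuousAt_rpow_const x (2*s) (Or.inr hs2.le)
  have hvc : ∀ m, 0 < m → ContinuousOn (v m) (Set.Icc 0 R) :=
    fun m hm r hr => (hvr m hm r hr).continuousWithinAt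
  have hvrc : ∀ m, 0 < m → ContinuousOn (vr m) (Set.Icc 0 R) :=
    fun m hm r hr => (hvrr m hm r hr).continuousWithinAt
  have hdv : ∀ m, 0 < m → ∀ r ∈ Set.Ioo (0:ℝ) R, HasDerivAt (v m) (vr m r) r :=
    fun m hm r hr => (hvr m hm r (Set.Ioo_subset_Icc_self hr)).hasDerivAt
      (Icc_mem_nhds hr.1 hr.2)
  have hdvr : ∀ m, 0 < m → ∀ r ∈ Set.Ioo (0:ℝ) R, HasDerivAt (vr m) (vrr m r) r :=
    fun m hm r hr => (hvrr m hm r (Set.Ioo_subset_Icc_self hr)).hasDerivAt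
      (Icc_mem_nhds hr.1 hr.2)
  have hode' : ∀ m, 0 < m → ∀ r ∈ Set.Ioo (0:ℝ) R,
      vrr m r = m * r ^ (2*s) * v m r - E m * v m r - (((d₁:ℝ)-1)/r) * vr m r := by
    intro m hm r hr
    have h := hode m hm r hr
    linarith
  -- integrability facts
  have intN : IntervalIntegrable (fun r => (v μ r)^2 * r^(d₁-1)) volume 0 R := by
    apply ContinuousOn.intervalIntegrable
    rw [huIcc]
    exact ((hvc μ hμ).pow 2).mul (continuous_pow _).continuousOn
  have intG : ∀ n, 0 < n →
      IntervalIntegrable (fun r => (v μ r * r^(d₁-1)) * v n r) volume 0 R := by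
    intro n hn
    apply ContinuousOn.intervalIntegrable
    rw [huIcc]
    exact ((hvc μ hμ).mul (continuous_pow _).continuousOn).mul (hvc n hn)
  have intH : ∀ n, 0 < n →
      IntervalIntegrable (fun r => (r^(2*s) * (v μ r * r^(d₁-1))) * v n r) volume 0 R := by
    intro n hn
    apply ContinuousOn.intervalIntegrable
    rw [huIcc]
    exact (hrpow.continuousOn.mul ((hvc μ hμ).mul (continuous_pow _).continuousOn)).mul (hvc n hn)
  -- Green-type identity
  have hGreen : ∀ n, 0 < n →
      (n - μ) * (∫ r in (0:ℝ)..R, (r^(2*s) * (v μ r * r^(d₁-1))) * v n r)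
        = (E n - E μ) * (∫ r in (0:ℝ)..R, (v μ r * r^(d₁-1)) * v n r) := by
    intro n hn
    set P : ℝ → ℝ := fun r => r ^ (d₁-1) * (vr n r * v μ r - vr μ r * v n r) with hPdef
    have key : (∫ r in (0:ℝ)..R,
        ((n - μ) * ((r^(2*s) * (v μ r * r^(d₁-1))) * v n r)
          - (E n - E μ) * ((v μ r * r^(d₁-1)) * v n r))) = P R - P 0 := by
      apply intervalIntegral.integral_eq_sub_of_hasDerivAt_of_le hR0
      · exact (continuous_pow _).continuousOn.mul
          (((hvrc n hn).mul (hvc μ hμ)).sub ((hvrc μ hμ).mul (hvc n hn)))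
      · intro r hr
        have hr0 : r ≠ 0 := ne_of_gt hr.1
        have h2 : HasDerivAt (fun r => vr n r * v μ r - vr μ r * v n r)
            ((vrr n r * v μ r + vr n r * vr μ r) - (vrr μ r * v n r + vr μ r * vr n r)) r :=
          ((hdvr n hn r hr).mul (hdv μ hμ r hr)).sub ((hdvr μ hμ r hr).mul (hdv n hn r hr))
        have h3 := (hasDerivAt_pow (d₁-1) r).mul h2
        refine h3.congr_deriv ?_
        symm
        beta_reduce
        rw [hode' n hn r hr, hode' μ hμ r hr]
        rcases eq_or_lt_of_le hd₁ with h | h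
        · obtain rfl : d₁ = 1 := h.symm
          norm_num
          ring
        · obtain ⟨k, rfl⟩ : ∃ k, d₁ = k + 2 := ⟨d₁ - 2, by omega⟩
          have e1 : k + 2 - 1 = k + 1 := by omega
          have e2 : k + 1 - 1 = k := by omega
          rw [e1, e2]
          push_cast
          field_simp
          ring
      · exact ((intH n hn).const_mul _).sub ((intG n hn).const_mul _)
    rw [intervalIntegral.integral_sub ((intH n hn).const_mul _) ((intG n hn).const_mul _),
        intervalIntegral.integral_const_mul, intervalIntegral.integral_const_mul] at key
    have hPR : P R = 0 := by
      simp [hPdef, hbcR μ hμ, hbcR n hn]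
    have hP0 : P 0 = 0 := by
      simp [hPdef, hbc0 μ hμ, hbc0 n hn]
    rw [hPR, hP0] at key
    linarith
  -- continuity of parametrized integrals in the coupling constant
  have keyCont : ∀ g : ℝ → ℝ, ContinuousOn g (Set.Icc 0 R) →
      ContinuousWithinAt (fun n => ∫ r in (0:ℝ)..R, g r * v n r) (Set.Ioi 0) μ := by
    intro g hg
    obtain ⟨Cg, hCg⟩ := isCompact_Icc.exists_bound_of_continuousOn hg
    have hKsub : (Set.Icc (μ/2) (2*μ) ×ˢ Set.Icc (0:ℝ) R) ⊆ Set.Ioi 0 ×ˢ Set.Icc 0 R := by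
      intro p hp
      exact ⟨lt_of_lt_of_le (by linarith : (0:ℝ) < μ/2) hp.1.1, hp.2⟩
    obtain ⟨C, hC⟩ := (isCompact_Icc.prod isCompact_Icc).exists_bound_of_continuousOn
      (hcv.mono hKsub)
    have hCg0 : 0 ≤ Cg := le_trans (norm_nonneg _) (hCg 0 (Set.left_mem_Icc.mpr hR0))
    have hIoo : Set.Ioo (μ/2) (2*μ) ∈ 𝓝[Set.Ioi (0:ℝ)] μ :=
      mem_nhdsWithin_of_mem_nhds (Ioo_mem_nhds (by linarith) (by linarith))
    apply intervalIntegral.continuousWithinAt_of_dominated_interval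
      (bound := fun _ => Cg * C)
    · filter_upwards [hIoo] with n hn
      rw [hΙeq]
      exact ((hg.mono Set.Ioc_subset_Icc_self).mul
        ((hvc n (lt_trans (by linarith) hn.1)).mono Set.Ioc_subset_Icc_self)).aestronglyMeasurable
        measurableSet_Ioc
    · filter_upwards [hIoo] with n hn
      refine MeasureTheory.ae_of_all _ fun t ht => ?_
      have htI : t ∈ Set.Icc 0 R := Set.Ioc_subset_Icc_self (hΙeq ▸ ht)
      have h1 : ‖g t‖ ≤ Cg := hCg t htI
      have h2 : ‖v n t‖ ≤ C := hC (n, t) ⟨⟨hn.1.le, hn.2.le⟩, htI⟩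
      calc ‖g t * v n t‖ = ‖g t‖ * ‖v n t‖ := norm_mul _ _
        _ ≤ Cg * C := mul_le_mul h1 h2 (norm_nonneg _) hCg0
    · exact intervalIntegrable_const
    · refine MeasureTheory.ae_of_all _ fun t ht => ?_
      have htI : t ∈ Set.Icc 0 R := Set.Ioc_subset_Icc_self (hΙeq ▸ ht)
      have hvt : ContinuousWithinAt (fun n => v n t) (Set.Ioi 0) μ := by
        have h1 : ContinuousWithinAt (fun n : ℝ => ((n, t) : ℝ × ℝ)) (Set.Ioi 0) μ :=
          (continuous_id.prodMk continuous_const).continuousWithinAt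
        exact Filter.Tendsto.comp (hcv (μ, t) ⟨hμ, htI⟩)
          (h1.tendsto_nhdsWithin (fun n hn => ⟨hn, htI⟩))
      exact continuousWithinAt_const.mul hvt
  -- normalization
  have hGn1 : (∫ r in (0:ℝ)..R, (v μ r * r^(d₁-1)) * v μ r) = 1 := by
    rw [← hnorm μ hμ]
    apply intervalIntegral.integral_congr
    intro r _
    ring
  have hGcont := keyCont (fun r => v μ r * r^(d₁-1))
    ((hvc μ hμ).mul (continuous_pow _).continuousOn)
  have hHcont := keyCont (fun r => r^(2*s) * (v μ r * r^(d₁-1)))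
    (hrpow.continuousOn.mul ((hvc μ hμ).mul (continuous_pow _).continuousOn))
  -- limit along 𝓝[>] μ
  have hL1 : 𝓝[>] μ ≤ 𝓝[Set.Ioi (0:ℝ)] μ := nhdsWithin_mono μ (fun x hx => lt_trans hμ hx)
  have hL2 : 𝓝[>] μ ≤ 𝓝[≠] μ := nhdsWithin_mono μ (fun x hx => ne_of_gt hx)
  have hslope : Filter.Tendsto (slope E μ) (𝓝[>] μ) (𝓝 (E' μ)) :=
    (hasDerivAt_iff_tendsto_slope.mp (hE μ hμ)).mono_left hL2
  have hGt : Filter.Tendsto (fun n => ∫ r in (0:ℝ)..R, (v μ r * r^(d₁-1)) * v n r)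
      (𝓝[>] μ) (𝓝 1) := by
    have h := hGcont.mono_left hL1
    simpa [hGn1] using h
  have hHt : Filter.Tendsto (fun n => ∫ r in (0:ℝ)..R, (r^(2*s) * (v μ r * r^(d₁-1))) * v n r)
      (𝓝[>] μ) (𝓝 (∫ r in (0:ℝ)..R, (r^(2*s) * (v μ r * r^(d₁-1))) * v μ r)) := by
    have h := hHcont.mono_left hL1
    simpa using h
  have hmul : Filter.Tendsto
      (fun n => slope E μ n * (∫ r in (0:ℝ)..R, (v μ r * r^(d₁-1)) * v n r))
      (𝓝[>] μ) (𝓝 (E' μ * 1)) := hslope.mul hGt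
  have heqev : ∀ᶠ n in 𝓝[>] μ,
      slope E μ n * (∫ r in (0:ℝ)..R, (v μ r * r^(d₁-1)) * v n r)
        = ∫ r in (0:ℝ)..R, (r^(2*s) * (v μ r * r^(d₁-1))) * v n r := by
    filter_upwards [self_mem_nhdsWithin] with n hn
    have hn0 : 0 < n := lt_trans hμ hn
    have h := hGreen n hn0
    have hne : n - μ ≠ 0 := sub_ne_zero.mpr (ne_of_gt hn)
    rw [slope_def_field]
    rw [div_mul_eq_mul_div, div_eq_iff hne, ← h]
    ring
  have hHt' : Filter.Tendsto
      (fun n => ∫ r in (0:ℝ)..R, (r^(2*s) * (v μ r * r^(d₁-1))) * v n r)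
      (𝓝[>] μ) (𝓝 (E' μ * 1)) := hmul.congr' heqev
  have hEI : E' μ * 1 = ∫ r in (0:ℝ)..R, (r^(2*s) * (v μ r * r^(d₁-1))) * v μ r :=
    tendsto_nhds_unique hHt' hHt
  rw [mul_one] at hEI
  -- Pohozaev identity
  set F : ℝ → ℝ := fun r => r^d₁ * (vr μ r * vr μ r)/2
      + ((d₁:ℝ)-2)/2 * (r^(d₁-1) * (v μ r * vr μ r))
      + E μ/2 * (r^d₁ * (v μ r * v μ r))
      - μ/2 * (r^(2*s) * r^d₁ * (v μ r * v μ r)) with hFdef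
  have hPoh : E μ - μ*(1+s) * (∫ r in (0:ℝ)..R, (r^(2*s) * (v μ r * r^(d₁-1))) * v μ r)
      = R^d₁ * (vr μ R)^2 / 2 := by
    have key : (∫ r in (0:ℝ)..R,
        (E μ * ((v μ r)^2 * r^(d₁-1))
          - μ*(1+s) * ((r^(2*s) * (v μ r * r^(d₁-1))) * v μ r))) = F R - F 0 := by
      apply intervalIntegral.integral_eq_sub_of_hasDerivAt_of_le hR0
      · apply ContinuousOn.sub
        apply ContinuousOn.add
        apply ContinuousOn.add
        · exact (((continuous_pow _).continuousOn.mul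
            ((hvrc μ hμ).mul (hvrc μ hμ))).div_const 2)
        · exact continuousOn_const.mul ((continuous_pow _).continuousOn.mul
            ((hvc μ hμ).mul (hvrc μ hμ)))
        · exact continuousOn_const.mul ((continuous_pow _).continuousOn.mul
            ((hvc μ hμ).mul (hvc μ hμ)))
        · exact continuousOn_const.mul ((hrpow.continuousOn.mul
            (continuous_pow _).continuousOn).mul ((hvc μ hμ).mul (hvc μ hμ)))
      · intro r hr
        have hr0 : r ≠ 0 := ne_of_gt hr.1
        have D1 := ((hasDerivAt_pow d₁ r).mul
          ((hdvr μ hμ r hr).mul (hdvr μ hμ r hr))).div_const 2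
        have D2 := HasDerivAt.const_mul (((d₁:ℝ)-2)/2)
          ((hasDerivAt_pow (d₁-1) r).mul ((hdv μ hμ r hr).mul (hdvr μ hμ r hr)))
        have D3 := HasDerivAt.const_mul (E μ/2)
          ((hasDerivAt_pow d₁ r).mul ((hdv μ hμ r hr).mul (hdv μ hμ r hr)))
        have D4 := HasDerivAt.const_mul (μ/2)
          (((Real.hasDerivAt_rpow_const (p := 2*s) (Or.inl hr0)).mul (hasDerivAt_pow d₁ r)).mul
            ((hdv μ hμ r hr).mul (hdv μ hμ r hr)))
        have hF := ((D1.add D2).add D3).sub D4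
        refine hF.congr_deriv ?_
        symm
        beta_reduce
        rw [hode' μ hμ r hr, Real.rpow_sub hr.1, Real.rpow_one]
        rcases eq_or_lt_of_le hd₁ with h | h
        · obtain rfl : d₁ = 1 := h.symm
          norm_num
          field_simp
          ring
        · obtain ⟨k, rfl⟩ : ∃ k, d₁ = k + 2 := ⟨d₁ - 2, by omega⟩
          have e1 : k + 2 - 1 = k + 1 := by omega
          have e2 : k + 1 - 1 = k := by omega
          rw [e1, e2]
          simp only [Pi.mul_apply]
          push_cast
          field_simp
          ring
      · exact (intN.const_mul _).sub ((intH μ hμ).const_mul _)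
    rw [intervalIntegral.integral_sub (intN.const_mul _) ((intH μ hμ).const_mul _),
        intervalIntegral.integral_const_mul, intervalIntegral.integral_const_mul,
        hnorm μ hμ] at key
    have hFR : F R = R^d₁ * (vr μ R)^2 / 2 := by
      rw [hFdef]
      simp only [hbcR μ hμ]
      ring
    have hF0 : F 0 = 0 := by
      rw [hFdef]
      simp [hbc0 μ hμ, zero_pow (by omega : d₁ ≠ 0)]
    rw [hFR, hF0, sub_zero] at key
    linarith
  rw [hEI] at *
  linarith [hPoh]
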